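/- If Γ₀ is a finite-index subgroup of a group Γ and Γ is nilpotent of degree exactly k (k-step nilpotent but not (k−1)-step), then Γ₀ is also nilpotent of degree exactly k, provided Γ is torsion-free. More precisely: in a torsion-free nilpotent group Γ of nilpotency class k, every finite-index subgroup also has nilpotency class k. -/

import Mathlib

open scoped commutatorElement

section Aux

variable {G : Type*} [Group G]

private lemma aux_comm_mul_left (x y z : G) : ⁅x * y, z⁆ = x * ⁅y, z⁆ * x⁻¹ * ⁅x, z⁆ := by
  simp only [commutatorElement_def, mul_inv_rev, inv_inv]
  group

private lemma aux_comm_mul_right (x z w : G) : ⁅x, z * w⁆ = ⁅x, z⁆ * (z * ⁅x, w⁆ * z⁻¹) := by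
  simp only [commutatorElement_def, mul_inv_rev, inv_inv]
  group

/-- If all commutators `⁅a^j, t⁆` are central, then `⁅a^m, g⁆ = ⁅a, g⁆^m`. -/
private lemma aux_comm_pow_left (a g : G) (h : ∀ (j : ℕ) (t u : G), Commute ⁅a ^ j, t⁆ u)
    (m : ℕ) : ⁅a ^ m, g⁆ = ⁅a, g⁆ ^ m := by
  induction m with
  | zero => simp [commutatorElement_def]
  | succ m ih =>
    rw [pow_succ', aux_comm_mul_left, (h m g a).symm.eq, mul_inv_cancel_right, ih, pow_succ]

private lemma aux_comm_pow_right (x g : G) (h : ∀ (t u : G), Commute ⁅x, t⁆ u) (n : ℕ) :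
    ⁅x, g ^ n⁆ = ⁅x, g⁆ ^ n := by
  induction n with
  | zero => simp [commutatorElement_def]
  | succ n ih =>
    rw [pow_succ', aux_comm_mul_right, ih, ((h g g).pow_left n).symm.eq,
      mul_inv_cancel_right, ← pow_succ']

private lemma aux_comm_central_mul (x c t : G) (hc : ∀ u : G, Commute c u) :
    ⁅x * c, t⁆ = ⁅x, t⁆ := by
  simp only [commutatorElement_def, mul_inv_rev]
  have h1 : c * t * c⁻¹ = t := by
    rw [(hc t).eq, mul_assoc, mul_inv_cancel, mul_one]
  calc x * c * t * (c⁻¹ * x⁻¹) * t⁻¹ = x * (c * t * c⁻¹) * x⁻¹ * t⁻¹ := by group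
    _ = x * t * x⁻¹ * t⁻¹ := by rw [h1]

end Aux

/-- Key lemma: if every `n`-th power lies in `Γ₀`, then every element of the `i`-th lower
central series of `Γ` has a positive power which agrees, modulo the `(i+1)`-st term of the
lower central series of `Γ`, with an element coming from the `i`-th lower central series
of `Γ₀`. -/
private lemma key_lemma {Γ : Type*} [Group Γ] (Γ₀ : Subgroup Γ) (n : ℕ) (hn : 0 < n)
    (hpow : ∀ g : Γ, g ^ n ∈ Γ₀) (i : ℕ) :
    ∀ y ∈ Subgroup.lowerCentralSeries (⊤ : Subgroup Γ) i, ∃ m, 0 < m ∧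
      ∃ z ∈ (Subgroup.lowerCentralSeries (⊤ : Subgroup Γ₀) i).map Γ₀.subtype,
        z⁻¹ * y ^ m ∈ Subgroup.lowerCentralSeries (⊤ : Subgroup Γ) (i + 1) := by
  induction i with
  | zero =>
    intro y _
    refine ⟨n, hn, y ^ n, Subgroup.mem_map.mpr ⟨⟨y ^ n, hpow y⟩, by rw [lowerCentralSeries_zero]; trivial, rfl⟩, by simp [one_mem]⟩
  | succ i ih =>
    set N := Subgroup.lowerCentralSeries (⊤ : Subgroup Γ) (i + 2) with hN
    haveI hNormal : N.Normal := by rw [hN]; infer_instance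
    let π : Γ →* Γ ⧸ N := QuotientGroup.mk' N
    have hπ1 : ∀ x : Γ, x ∈ N → π x = 1 := fun x hx => (QuotientGroup.eq_one_iff x).2 hx
    have hcen : ∀ x : Γ, x ∈ Subgroup.lowerCentralSeries (⊤ : Subgroup Γ) (i + 1) → ∀ q : Γ ⧸ N, Commute (π x) q := by
      intro x hx q
      obtain ⟨t, rfl⟩ := QuotientGroup.mk'_surjective N q
      rw [← commutatorElement_eq_one_iff_commute, ← map_commutatorElement]
      exact hπ1 _ (Subgroup.commutator_mem_commutator hx (Subgroup.mem_top t))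
    have hval : ∀ (z x : Γ) (m : ℕ), z⁻¹ * x ^ m ∈ N → (π x) ^ m = π z := by
      intro z x m h
      have h1 := hπ1 _ h
      rw [map_mul, map_inv, map_pow, inv_mul_eq_one] at h1
      exact h1.symm
    intro y hy
    rw [lowerCentralSeries_succ] at hy
    induction hy using Subgroup.closure_induction with
    | mem y hy' =>
      obtain ⟨a, ha, g, -, rfl⟩ := hy'
      obtain ⟨m, hm, z, hz, hc⟩ := ih a ha
      obtain ⟨w, hw, rfl⟩ := Subgroup.mem_map.mp hz
      refine ⟨m * n, Nat.mul_pos hm hn, Γ₀.subtype ⁅w, (⟨g ^ n, hpow g⟩ : Γ₀)⁆, ?_, ?_⟩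
      · exact Subgroup.mem_map.mpr ⟨⁅w, (⟨g ^ n, hpow g⟩ : Γ₀)⁆,
          Subgroup.commutator_mem_commutator hw (Subgroup.mem_top _), rfl⟩
      · have goal1 : (π ⁅a, g⁆) ^ (m * n) = π (Γ₀.subtype ⁅w, (⟨g ^ n, hpow g⟩ : Γ₀)⁆) := by
          have hA : ∀ (j : ℕ) (t : Γ ⧸ N) (u : Γ ⧸ N), Commute ⁅(π a) ^ j, t⁆ u := by
            intro j t u
            obtain ⟨t', rfl⟩ := QuotientGroup.mk'_surjective N t
            rw [← map_pow, ← map_commutatorElement]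
            exact hcen _ (Subgroup.commutator_mem_commutator (pow_mem ha j) (Subgroup.mem_top t')) _
          have e1 : π ⁅a, g⁆ = ⁅π a, π g⁆ := map_commutatorElement π a g
          have e2 : ⁅π a, π g⁆ ^ (m * n) = ⁅(π a) ^ m, (π g) ^ n⁆ := by
            rw [pow_mul, ← aux_comm_pow_left (π a) (π g) hA m,
              ← aux_comm_pow_right ((π a) ^ m) (π g) (fun t u => hA m t u) n]
          have e3 : π (a ^ m) = π ((w : Γ)) * π ((w : Γ)⁻¹ * a ^ m) := by
            rw [← map_mul, mul_inv_cancel_left]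
          have e4 : ⁅(π a) ^ m, (π g) ^ n⁆ = ⁅π (w : Γ), (π g) ^ n⁆ := by
            rw [← map_pow, e3]
            exact aux_comm_central_mul _ _ _ (hcen _ hc)
          rw [e1, e2, e4]
          have : Γ₀.subtype ⁅w, (⟨g ^ n, hpow g⟩ : Γ₀)⁆ = ⁅(w : Γ), g ^ n⁆ := by
            rw [map_commutatorElement]; rfl
          rw [this, map_commutatorElement, map_pow]
        have h1 : π ((Γ₀.subtype ⁅w, (⟨g ^ n, hpow g⟩ : Γ₀)⁆)⁻¹ * ⁅a, g⁆ ^ (m * n)) = 1 := by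
          rw [map_mul, map_inv, map_pow, goal1, inv_mul_cancel]
        exact (QuotientGroup.eq_one_iff _).mp h1
    | one =>
      exact ⟨1, one_pos, 1, one_mem _, by simp [one_mem]⟩
    | mul x y hx hy px py =>
      obtain ⟨m₁, hm₁, z₁, hz₁, hc₁⟩ := px
      obtain ⟨m₂, hm₂, z₂, hz₂, hc₂⟩ := py
      have hx' : x ∈ Subgroup.lowerCentralSeries (⊤ : Subgroup Γ) (i + 1) := by
        rw [lowerCentralSeries_succ]; exact hx
      have hy' : y ∈ Subgroup.lowerCentralSeries (⊤ : Subgroup Γ) (i + 1) := by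
        rw [lowerCentralSeries_succ]; exact hy
      refine ⟨m₁ * m₂, Nat.mul_pos hm₁ hm₂, z₁ ^ m₂ * z₂ ^ m₁,
        mul_mem (pow_mem hz₁ m₂) (pow_mem hz₂ m₁), ?_⟩
      have e : (π x * π y) ^ (m₁ * m₂) = π z₁ ^ m₂ * π z₂ ^ m₁ := by
        rw [(hcen x hx' (π y)).mul_pow, pow_mul, hval z₁ x m₁ hc₁, Nat.mul_comm m₁ m₂,
          pow_mul, hval z₂ y m₂ hc₂]
      have h1 : π ((z₁ ^ m₂ * z₂ ^ m₁)⁻¹ * (x * y) ^ (m₁ * m₂)) = 1 := by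
        simp only [map_mul, map_inv, map_pow]
        rw [e, inv_mul_cancel]
      exact (QuotientGroup.eq_one_iff _).mp h1
    | inv x hx px =>
      obtain ⟨m, hm, z, hz, hc⟩ := px
      refine ⟨m, hm, z⁻¹, inv_mem hz, ?_⟩
      have h1 : π ((z⁻¹)⁻¹ * (x⁻¹) ^ m) = 1 := by
        rw [inv_inv, inv_pow, map_mul, map_inv, map_pow, hval z x m hc, mul_inv_cancel]
      exact (QuotientGroup.eq_one_iff _).mp h1

/-- In a torsion-free nilpotent group `Γ` of nilpotency class exactly
`k`, every finite-index subgroup `Γ₀` also has nilpotency class exactly `k`. -/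
theorem nilpotencyClass_of_finiteIndex_subgroup {Γ : Type*} [Group Γ] [Group.IsNilpotent Γ]
    (htf : ∀ g : Γ, g ≠ 1 → ∀ m : ℕ, 0 < m → g ^ m ≠ 1)
    (k : ℕ) (hk : Group.nilpotencyClass Γ = k)
    (Γ₀ : Subgroup Γ) (hfi : 0 < Γ₀.index) :
    Group.nilpotencyClass Γ₀ = k := by
  have hFI : Γ₀.FiniteIndex := ⟨hfi.ne'⟩
  rcases Nat.eq_zero_or_pos k with hk0 | hkpos
  · subst hk0
    have hsub : Subsingleton Γ := nilpotencyClass_zero_iff_subsingleton.mp hk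
    have : Subsingleton Γ₀ := ⟨fun a b => Subtype.ext (Subsingleton.elim _ _)⟩
    exact nilpotencyClass_zero_iff_subsingleton.mpr this
  · have hub : Group.nilpotencyClass Γ₀ ≤ k := hk ▸ Subgroup.nilpotencyClass_le Γ₀
    have hlb : k ≤ Group.nilpotencyClass Γ₀ := by
      by_contra hlt
      push_neg at hlt
      -- then the (k-1)-st term of the lower central series of Γ₀ is trivial
      have hbot : Subgroup.lowerCentralSeries (⊤ : Subgroup Γ₀) (k - 1) = ⊥ :=
        lowerCentralSeries_eq_bot_iff_nilpotencyClass_le.mpr (by omega)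
      -- but the (k-1)-st term of Γ's series is nontrivial
      have hne : Subgroup.lowerCentralSeries (⊤ : Subgroup Γ) (k - 1) ≠ ⊥ := by
        intro h
        have := lowerCentralSeries_eq_bot_iff_nilpotencyClass_le.mp h
        omega
      obtain ⟨y, hy, hy1⟩ : ∃ y ∈ Subgroup.lowerCentralSeries (⊤ : Subgroup Γ) (k - 1), y ≠ 1 := by
        by_contra hcon
        push_neg at hcon
        exact hne ((Subgroup.eq_bot_iff_forall _).mpr hcon)
      set n := Γ₀.normalCore.index with hn'
      have hn : 0 < n := Nat.pos_of_ne_zero Subgroup.FiniteIndex.index_ne_zero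
      have hpow : ∀ g : Γ, g ^ n ∈ Γ₀ := fun g =>
        Γ₀.normalCore_le (Γ₀.normalCore.pow_index_mem g)
      obtain ⟨m, hm, z, hz, hmem⟩ := key_lemma Γ₀ n hn hpow (k - 1) y hy
      rw [show k - 1 + 1 = k from by omega] at hmem
      have hbotk : Subgroup.lowerCentralSeries (⊤ : Subgroup Γ) k = ⊥ :=
        lowerCentralSeries_eq_bot_iff_nilpotencyClass_le.mpr (le_of_eq hk)
      rw [hbotk, Subgroup.mem_bot, inv_mul_eq_one] at hmem
      rw [hbot, Subgroup.map_bot, Subgroup.mem_bot] at hz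
      exact htf y hy1 m hm (by rw [← hmem, hz])
    omega
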